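/- (Lemma 2) In the uniform encoding model with parameter u, if d₀ ≤ u ≤ d₀ + ⌊(d₀−1)/2⌋ then the probability of encoding failure is exactly P(encoding failure) = (1/2) · (Σ_{w=d₀}^{u} B₀,w · C(n−w, u−w)) / C(n,u). -/

import Mathlib

/-- The support of a binary vector: the set of coordinates where it is nonzero. -/
def supp {n : ℕ} (c : Fin n → ZMod 2) : Finset (Fin n) :=
  Finset.univ.filter fun i => c i ≠ 0

/-- The Hamming weight of a binary vector. -/
def wt {n : ℕ} (c : Fin n → ZMod 2) : ℕ := (supp c).card

/-- In the uniform encoding model with parameter `u`, the sample space consists of pairs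
`(U, b)` where `U` is a `u`-element subset of the coordinates and `b` is a binary vector
(only its restriction to `U` matters, so taking `b` uniform on all of `𝔽₂ⁿ` gives the
uniform distribution on `𝔽₂^U`).  `failCount` counts the outcomes for which the linear
system `G₀^U d = b^U` has no solution `d`. -/
def failCount (n l : ℕ) (G : Matrix (Fin n) (Fin l) (ZMod 2)) (u : ℕ) : ℕ :=
  (((Finset.univ : Finset (Fin n)).powersetCard u ×ˢ
      (Finset.univ : Finset (Fin n → ZMod 2))).filter
    fun p => ¬ ∃ d : Fin l → ZMod 2, ∀ i ∈ p.1, G.mulVec d i = p.2 i).card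

namespace Stmt8Aux

open Finset Matrix

lemma wt_pos {n : ℕ} {c : Fin n → ZMod 2} (hc : c ≠ 0) : 1 ≤ wt c := by
  obtain ⟨i, hi⟩ := Function.ne_iff.mp hc
  have hi' : c i ≠ 0 := by simpa using hi
  have : i ∈ supp c := by simp [supp, hi']
  exact Finset.card_pos.mpr ⟨i, this⟩

lemma wt_zero {n : ℕ} : wt (0 : Fin n → ZMod 2) = 0 := by
  simp [wt, supp]

/-- Uniqueness: a set of at most `d₀ + ⌊(d₀-1)/2⌋` coordinates contains the support of at
most one nonzero dual codeword. -/
lemma unique_dual {n l : ℕ} {G₀ : Matrix (Fin n) (Fin l) (ZMod 2)} {d₀ u : ℕ}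
    (hmin : ∀ c : Fin n → ZMod 2, Matrix.vecMul c G₀ = 0 → c ≠ 0 → d₀ ≤ wt c)
    (hu₂ : u ≤ d₀ + (d₀ - 1) / 2) (hd1 : 1 ≤ d₀)
    {U : Finset (Fin n)} (hU : U.card = u)
    {c₁ c₂ : Fin n → ZMod 2}
    (h1 : Matrix.vecMul c₁ G₀ = 0) (h1n : c₁ ≠ 0) (h1s : supp c₁ ⊆ U)
    (h2 : Matrix.vecMul c₂ G₀ = 0) (h2n : c₂ ≠ 0) (h2s : supp c₂ ⊆ U) :
    c₁ = c₂ := by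
  by_contra hne
  have hadd : ∀ a b : ZMod 2, a + b = 0 → a = b := by decide
  have hsum0 : c₁ + c₂ ≠ 0 := by
    intro h
    exact hne (funext fun i => hadd _ _ (congrFun h i))
  have hvs : Matrix.vecMul (c₁ + c₂) G₀ = 0 := by
    rw [Matrix.add_vecMul, h1, h2, add_zero]
  have hwt : d₀ ≤ wt (c₁ + c₂) := hmin _ hvs hsum0
  have hS : supp (c₁ + c₂) = (supp c₁ ∪ supp c₂) \ (supp c₁ ∩ supp c₂) := by
    ext i
    simp only [supp, Finset.mem_filter, Finset.mem_univ, true_and, Finset.mem_sdiff,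
      Finset.mem_union, Finset.mem_inter, Pi.add_apply]
    have : ∀ a b : ZMod 2, (a + b ≠ 0 ↔ (a ≠ 0 ∨ b ≠ 0) ∧ ¬(a ≠ 0 ∧ b ≠ 0)) := by decide
    exact this _ _
  have hcard1 : (supp c₁ ∪ supp c₂).card + (supp c₁ ∩ supp c₂).card = wt c₁ + wt c₂ :=
    Finset.card_union_add_card_inter _ _
  have hcard2 : wt (c₁ + c₂) = (supp c₁ ∪ supp c₂).card - (supp c₁ ∩ supp c₂).card := by
    rw [wt, hS, Finset.card_sdiff_of_subset (Finset.inter_subset_union)]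
  have hInter : (supp c₁ ∩ supp c₂) ⊆ (supp c₁ ∪ supp c₂) := Finset.inter_subset_union
  have hIcard : (supp c₁ ∩ supp c₂).card ≤ (supp c₁ ∪ supp c₂).card :=
    Finset.card_le_card hInter
  have hUle : (supp c₁ ∪ supp c₂).card ≤ u := by
    rw [← hU]; exact Finset.card_le_card (Finset.union_subset h1s h2s)
  have hw1 : d₀ ≤ wt c₁ := hmin _ h1 h1n
  have hw2 : d₀ ≤ wt c₂ := hmin _ h2 h2n
  omega

/-- Extend a vector defined on `U` by zero. -/
def ext0 {n : ℕ} (U : Finset (Fin n)) (v : ↥U → ZMod 2) : Fin n → ZMod 2 :=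
  fun i => if h : i ∈ U then v ⟨i, h⟩ else 0

/-- The submatrix of `G₀` given by the rows in `U`. -/
def AU {n l : ℕ} (G₀ : Matrix (Fin n) (Fin l) (ZMod 2)) (U : Finset (Fin n)) :
    Matrix ↥U (Fin l) (ZMod 2) :=
  Matrix.of fun i j => G₀ i.1 j

lemma vecMul_ext0 {n l : ℕ} (G₀ : Matrix (Fin n) (Fin l) (ZMod 2)) (U : Finset (Fin n))
    (v : ↥U → ZMod 2) :
    Matrix.vecMul (ext0 U v) G₀ = Matrix.vecMul v (AU G₀ U) := by
  funext j
  show (∑ i, ext0 U v i * G₀ i j) = ∑ i : ↥U, v i * (AU G₀ U) i j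
  calc (∑ i, ext0 U v i * G₀ i j) = ∑ i ∈ U, ext0 U v i * G₀ i j :=
        (Finset.sum_subset (Finset.subset_univ U)
          (fun i _ hi => by simp [ext0, hi])).symm
    _ = ∑ i ∈ U.attach, ext0 U v i.1 * G₀ i.1 j :=
        (Finset.sum_attach U (fun i => ext0 U v i * G₀ i j)).symm
    _ = ∑ i : ↥U, v i * (AU G₀ U) i j := by
        rw [Finset.univ_eq_attach]
        exact Finset.sum_congr rfl (fun i _ => by simp [ext0, i.2, AU])

lemma ext0_eq_self {n : ℕ} {U : Finset (Fin n)} {c : Fin n → ZMod 2} (h : supp c ⊆ U) :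
    ext0 U (fun i => c i.1) = c := by
  funext i
  by_cases hi : i ∈ U
  · simp [ext0, hi]
  · have : c i = 0 := by
      by_contra h0
      exact hi (h (by simp [supp, h0]))
    simp [ext0, hi, this]

lemma supp_ext0 {n : ℕ} (U : Finset (Fin n)) (v : ↥U → ZMod 2) : supp (ext0 U v) ⊆ U := by
  intro i hi
  simp only [supp, Finset.mem_filter] at hi
  by_contra hiU
  exact hi.2 (by simp [ext0, hiU])

lemma dot_restrict {n : ℕ} {U : Finset (Fin n)} {c : Fin n → ZMod 2} (h : supp c ⊆ U)
    (b : Fin n → ZMod 2) :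
    (fun i : ↥U => c i.1) ⬝ᵥ (fun i : ↥U => b i.1) = c ⬝ᵥ b := by
  show (∑ i : ↥U, c i.1 * b i.1) = ∑ i, c i * b i
  rw [Finset.univ_eq_attach, Finset.sum_attach U (fun i => c i * b i)]
  apply Finset.sum_subset (Finset.subset_univ U)
  intro i _ hi
  have : c i = 0 := by
    by_contra h0
    exact hi (h (by simp [supp, h0]))
  simp [this]

/-- Counting vectors with odd scalar product with a fixed nonzero vector. -/
lemma card_dot_ne_zero {n : ℕ} {c : Fin n → ZMod 2} (hc : c ≠ 0) :
    (Finset.univ.filter fun b : Fin n → ZMod 2 => c ⬝ᵥ b ≠ 0).card = 2 ^ (n - 1) := by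
  classical
  obtain ⟨i₀, hi₀'⟩ := Function.ne_iff.mp hc
  have hi₀ : c i₀ ≠ 0 := by simpa using hi₀'
  have hn : 1 ≤ n := Nat.one_le_iff_ne_zero.mpr (fun h => (h ▸ i₀).elim0)
  have hc1 : c i₀ = 1 := by
    have h1 : ∀ a : ZMod 2, a ≠ 0 → a = 1 := by decide
    exact h1 _ hi₀
  have hflip : ∀ b : Fin n → ZMod 2, c ⬝ᵥ (b + Pi.single i₀ 1) = c ⬝ᵥ b + 1 := by
    intro b
    rw [dotProduct_add, dotProduct_single, hc1, mul_one]
  have hswap : ∀ a : ZMod 2, a ≠ 0 ↔ ¬ (a + 1 ≠ 0) := by decide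
  have hcards : (Finset.univ.filter fun b : Fin n → ZMod 2 => c ⬝ᵥ b ≠ 0).card
      = (Finset.univ.filter fun b : Fin n → ZMod 2 => ¬ c ⬝ᵥ b ≠ 0).card := by
    have hinv : ∀ b : Fin n → ZMod 2, b + Pi.single i₀ 1 + Pi.single i₀ 1 = b := by
      intro b
      rw [add_assoc, ← Pi.single_add, show (1 : ZMod 2) + 1 = 0 by decide, Pi.single_zero,
        add_zero]
    apply Finset.card_nbij' (fun b => b + Pi.single i₀ 1) (fun b => b + Pi.single i₀ 1)
    · intro b hb
      simp only [Finset.mem_coe, Finset.mem_filter, Finset.mem_univ, true_and] at hb ⊢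
      rw [hflip]
      have h1 : ∀ a : ZMod 2, a ≠ 0 → ¬ a + 1 ≠ 0 := by decide
      exact h1 _ hb
    · intro b hb
      simp only [Finset.mem_coe, Finset.mem_filter, Finset.mem_univ, true_and] at hb ⊢
      rw [hflip]
      have h1 : ∀ a : ZMod 2, ¬ a ≠ 0 → a + 1 ≠ 0 := by decide
      exact h1 _ hb
    · intro b _
      exact hinv b
    · intro b _
      exact hinv b
  have htot := Finset.card_filter_add_card_filter_not
    (s := (Finset.univ : Finset (Fin n → ZMod 2))) (p := fun b => c ⬝ᵥ b ≠ 0)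
  have hcu : (Finset.univ : Finset (Fin n → ZMod 2)).card = 2 ^ n := by
    simp [Finset.card_univ]
  have hpow : 2 ^ n = 2 * 2 ^ (n - 1) := by
    conv_lhs => rw [show n = (n - 1) + 1 from (Nat.sub_add_cancel hn).symm]
    ring
  omega


lemma mulVecLin_AU {n l : ℕ} (G₀ : Matrix (Fin n) (Fin l) (ZMod 2)) (U : Finset (Fin n))
    (d : Fin l → ZMod 2) (i : ↥U) :
    (AU G₀ U).mulVecLin d i = G₀.mulVec d i.1 := rfl

lemma solvable_iff_mem_range {n l : ℕ} (G₀ : Matrix (Fin n) (Fin l) (ZMod 2))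
    (U : Finset (Fin n)) (b : Fin n → ZMod 2) :
    (∃ d : Fin l → ZMod 2, ∀ i ∈ U, G₀.mulVec d i = b i)
      ↔ (fun i : ↥U => b i.1) ∈ LinearMap.range (AU G₀ U).mulVecLin := by
  constructor
  · rintro ⟨d, hd⟩
    exact ⟨d, funext fun i => (mulVecLin_AU G₀ U d i).trans (hd i.1 i.2)⟩
  · rintro ⟨d, hd⟩
    exact ⟨d, fun i hi => ((mulVecLin_AU G₀ U d ⟨i, hi⟩).symm).trans (congrFun hd ⟨i, hi⟩)⟩

/-- The key dichotomy: for a fixed `u`-set `U`, the number of `b` for which the system is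
unsolvable is `2^(n-1)` if `U` contains the support of a (necessarily unique) nonzero dual
codeword, and `0` otherwise. -/
lemma card_fail_U {n l u : ℕ} (G₀ : Matrix (Fin n) (Fin l) (ZMod 2)) {d₀ : ℕ}
    (hmin : ∀ c : Fin n → ZMod 2, Matrix.vecMul c G₀ = 0 → c ≠ 0 → d₀ ≤ wt c)
    (hu₂ : u ≤ d₀ + (d₀ - 1) / 2) (hd1 : 1 ≤ d₀)
    {U : Finset (Fin n)} (hU : U.card = u) :
    (Finset.univ.filter fun b : Fin n → ZMod 2 =>
        ¬ ∃ d : Fin l → ZMod 2, ∀ i ∈ U, G₀.mulVec d i = b i).card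
      = if ∃ c : Fin n → ZMod 2, Matrix.vecMul c G₀ = 0 ∧ c ≠ 0 ∧ supp c ⊆ U
        then 2 ^ (n - 1) else 0 := by
  classical
  set A := AU G₀ U with hA
  have hcardU : Module.finrank (ZMod 2) (↥U → ZMod 2) = u := by
    rw [Module.finrank_pi, Fintype.card_coe, hU]
  have hrnT := LinearMap.finrank_range_add_finrank_ker (Aᵀ.mulVecLin)
  rw [hcardU] at hrnT
  have hrankT : Aᵀ.rank = Module.finrank (ZMod 2) (LinearMap.range Aᵀ.mulVecLin) := rfl
  have hrankA : A.rank = Module.finrank (ZMod 2) (LinearMap.range A.mulVecLin) := rfl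
  have htrans : Aᵀ.rank = A.rank := Matrix.rank_transpose A
  have hker_iff : ∀ v : ↥U → ZMod 2, v ∈ LinearMap.ker Aᵀ.mulVecLin ↔
      Matrix.vecMul (ext0 U v) G₀ = 0 := by
    intro v
    rw [LinearMap.mem_ker, Matrix.mulVecLin_apply, Matrix.mulVec_transpose, ← vecMul_ext0]
  have hv0 : ∀ v : ↥U → ZMod 2, ext0 U v = 0 → v = 0 := by
    intro v h0
    funext i
    have := congrFun h0 i.1
    simpa [ext0, i.2] using this
  split_ifs with hP
  · obtain ⟨c₀, hc₀, hc₀n, hc₀s⟩ := hP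
    have huniq : ∀ c, Matrix.vecMul c G₀ = 0 → c ≠ 0 → supp c ⊆ U → c = c₀ :=
      fun c h hn hs => unique_dual hmin hu₂ hd1 hU h hn hs hc₀ hc₀n hc₀s
    set r : ↥U → ZMod 2 := fun i => c₀ i.1 with hr
    have hrext : ext0 U r = c₀ := ext0_eq_self hc₀s
    have hrker : r ∈ LinearMap.ker Aᵀ.mulVecLin := by
      rw [hker_iff, hrext]; exact hc₀
    have hr0 : r ≠ 0 := by
      intro h
      apply hc₀n
      rw [← hrext, h]
      funext i; simp [ext0]
    have hker_eq : LinearMap.ker Aᵀ.mulVecLin = Submodule.span (ZMod 2) {r} := by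
      apply le_antisymm
      · intro v hv
        rw [hker_iff] at hv
        by_cases h0 : ext0 U v = 0
        · rw [hv0 v h0]
          exact Submodule.zero_mem _
        · have hveq := huniq _ hv h0 (supp_ext0 U v)
          have : v = r := by
            funext i
            have := congrFun hveq i.1
            simpa [ext0, i.2, hr] using this
          rw [this]
          exact Submodule.mem_span_singleton_self r
      · rw [Submodule.span_le, Set.singleton_subset_iff]
        exact hrker
    have hkrank : Module.finrank (ZMod 2) (LinearMap.ker Aᵀ.mulVecLin) = 1 := by
      rw [hker_eq]; exact finrank_span_singleton hr0
    have hA_rank : Module.finrank (ZMod 2) (LinearMap.range A.mulVecLin) = u - 1 := by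
      rw [← hrankA, ← htrans, hrankT]
      omega
    -- the functional v ↦ r ⬝ᵥ v
    let φ : (↥U → ZMod 2) →ₗ[ZMod 2] ZMod 2 :=
      { toFun := fun v => r ⬝ᵥ v
        map_add' := fun x y => dotProduct_add r x y
        map_smul' := fun m x => by
          simp only [RingHom.id_apply, dotProduct, Pi.smul_apply, smul_eq_mul,
            Finset.mul_sum]
          exact Finset.sum_congr rfl fun i _ => by ring }
    have hφ_apply : ∀ v, φ v = r ⬝ᵥ v := fun v => rfl
    have hφ0 : LinearMap.range φ ≠ ⊥ := by
      obtain ⟨i₀, hi₀⟩ := Function.ne_iff.mp hr0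
      have hi₀' : r i₀ ≠ 0 := by simpa using hi₀
      intro h
      have hmem : φ (Pi.single i₀ 1) ∈ LinearMap.range φ := ⟨_, rfl⟩
      rw [h, Submodule.mem_bot, hφ_apply, dotProduct_single, mul_one] at hmem
      exact hi₀' hmem
    have hφrange : Module.finrank (ZMod 2) (LinearMap.range φ) = 1 := by
      have hle := Submodule.finrank_le (LinearMap.range φ)
      have hne : Module.finrank (ZMod 2) (LinearMap.range φ) ≠ 0 := by
        rw [Ne, Submodule.finrank_eq_zero]
        exact hφ0
      have hself : Module.finrank (ZMod 2) (ZMod 2) = 1 := Module.finrank_self _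
      omega
    have hφrn := LinearMap.finrank_range_add_finrank_ker φ
    rw [hcardU, hφrange] at hφrn
    have hle : LinearMap.range A.mulVecLin ≤ LinearMap.ker φ := by
      rintro x ⟨d, rfl⟩
      rw [LinearMap.mem_ker, hφ_apply, Matrix.mulVecLin_apply, Matrix.dotProduct_mulVec]
      have hrA : Matrix.vecMul r A = 0 := by
        rw [hA, ← vecMul_ext0, hrext]
        exact hc₀
      rw [hrA, zero_dotProduct]
    have heq : LinearMap.range A.mulVecLin = LinearMap.ker φ :=
      Submodule.eq_of_le_of_finrank_le hle (by omega)
    have hfail : ∀ b : Fin n → ZMod 2,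
        (¬ ∃ d : Fin l → ZMod 2, ∀ i ∈ U, G₀.mulVec d i = b i) ↔ c₀ ⬝ᵥ b ≠ 0 := by
      intro b
      rw [solvable_iff_mem_range, ← hA, heq, LinearMap.mem_ker, hφ_apply, dot_restrict hc₀s]
    rw [Finset.filter_congr (fun b _ => hfail b)]
    exact card_dot_ne_zero hc₀n
  · have hker_bot : LinearMap.ker Aᵀ.mulVecLin = ⊥ := by
      rw [Submodule.eq_bot_iff]
      intro v hv
      rw [hker_iff] at hv
      by_cases h0 : ext0 U v = 0
      · exact hv0 v h0
      · exact absurd ⟨ext0 U v, hv, h0, supp_ext0 U v⟩ hP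
    have hA_rank : Module.finrank (ZMod 2) (LinearMap.range A.mulVecLin) = u := by
      rw [← hrankA, ← htrans, hrankT]
      rw [hker_bot] at hrnT
      simpa using hrnT
    have hrange_top : LinearMap.range A.mulVecLin = ⊤ :=
      Submodule.eq_top_of_finrank_eq (by rw [hA_rank, hcardU])
    rw [Finset.card_eq_zero, Finset.filter_eq_empty_iff]
    intro b _
    rw [not_not, solvable_iff_mem_range, ← hA, hrange_top]
    trivial


/-- The number of `u`-subsets of `Fin n` containing a fixed set `s`. -/
lemma card_supersets {n : ℕ} (s : Finset (Fin n)) {u : ℕ} (h : s.card ≤ u) :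
    ((Finset.univ.powersetCard u).filter fun U => s ⊆ U).card
      = (n - s.card).choose (u - s.card) := by
  classical
  have hrhs : (n - s.card).choose (u - s.card) = (Finset.powersetCard (u - s.card) sᶜ).card := by
    rw [Finset.card_powersetCard, Finset.card_compl, Fintype.card_fin]
  rw [hrhs]
  apply Finset.card_nbij' (fun U => U \ s) (fun V => V ∪ s)
  · intro U hU
    simp only [Finset.mem_coe, Finset.mem_filter, Finset.mem_powersetCard_univ] at hU
    rw [Finset.mem_coe, Finset.mem_powersetCard]
    constructor
    · intro i hi
      rw [Finset.mem_compl]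
      exact (Finset.mem_sdiff.mp hi).2
    · rw [Finset.card_sdiff_of_subset hU.2, hU.1]
  · intro V hV
    rw [Finset.mem_coe, Finset.mem_powersetCard] at hV
    have hdisj : Disjoint V s := Finset.disjoint_left.mpr fun i hi hs =>
      (Finset.mem_compl.mp (hV.1 hi)) hs
    simp only [Finset.mem_coe, Finset.mem_filter, Finset.mem_powersetCard_univ]
    constructor
    · rw [Finset.card_union_of_disjoint hdisj, hV.2]
      omega
    · exact Finset.subset_union_right
  · intro U hU
    simp only [Finset.mem_coe, Finset.mem_filter] at hU
    exact Finset.sdiff_union_of_subset hU.2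
  · intro V hV
    rw [Finset.mem_coe, Finset.mem_powersetCard] at hV
    have hdisj : Disjoint V s := Finset.disjoint_left.mpr fun i hi hs =>
      (Finset.mem_compl.mp (hV.1 hi)) hs
    exact Finset.union_sdiff_cancel_right hdisj

end Stmt8Aux

theorem stmt8 (n l : ℕ) (G₀ : Matrix (Fin n) (Fin l) (ZMod 2)) (d₀ : ℕ)
    (hdual : ∃ c : Fin n → ZMod 2, Matrix.vecMul c G₀ = 0 ∧ c ≠ 0)
    (hd₀ : IsLeast
      {w : ℕ | ∃ c : Fin n → ZMod 2, Matrix.vecMul c G₀ = 0 ∧ c ≠ 0 ∧ wt c = w} d₀)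
    (B : ℕ → ℕ)
    (hB : ∀ w, (B w : ℕ) =
      {c : Fin n → ZMod 2 | Matrix.vecMul c G₀ = 0 ∧ wt c = w}.ncard)
    (u : ℕ) (hu₁ : d₀ ≤ u) (hu₂ : u ≤ d₀ + (d₀ - 1) / 2) (hun : u ≤ n) :
    (failCount n l G₀ u : ℝ) / ((n.choose u : ℝ) * 2 ^ n)
      = (1 / 2 : ℝ) * ((∑ w ∈ Finset.Icc d₀ u,
          (B w : ℝ) * ((n - w).choose (u - w) : ℝ)) / (n.choose u : ℝ)) := by
  classical
  obtain ⟨c₁, hc₁, hc₁n, hc₁w⟩ := hd₀.1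
  have hd1 : 1 ≤ d₀ := by rw [← hc₁w]; exact Stmt8Aux.wt_pos hc₁n
  have hmin : ∀ c : Fin n → ZMod 2, Matrix.vecMul c G₀ = 0 → c ≠ 0 → d₀ ≤ wt c :=
    fun c h hn => hd₀.2 ⟨c, h, hn, rfl⟩
  have hn1 : 1 ≤ n := le_trans (le_trans hd1 hu₁) hun
  -- Step 1: failCount as a sum over U of per-U failure counts
  have hstep1 : failCount n l G₀ u
      = ∑ U ∈ (Finset.univ : Finset (Fin n)).powersetCard u,
          (Finset.univ.filter fun b : Fin n → ZMod 2 =>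
            ¬ ∃ d : Fin l → ZMod 2, ∀ i ∈ U, G₀.mulVec d i = b i).card := by
    rw [failCount, Finset.card_filter, Finset.sum_product]
    exact Finset.sum_congr rfl fun U _ => (Finset.card_filter _ _).symm
  -- Step 2: evaluate each per-U count via the dichotomy
  have hstep2 : failCount n l G₀ u
      = 2 ^ (n - 1) *
        (((Finset.univ : Finset (Fin n)).powersetCard u).filter fun U =>
          ∃ c : Fin n → ZMod 2, Matrix.vecMul c G₀ = 0 ∧ c ≠ 0 ∧ supp c ⊆ U).card := by
    rw [hstep1,
      Finset.sum_congr rfl fun U hU =>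
        Stmt8Aux.card_fail_U G₀ hmin hu₂ hd1 (Finset.mem_powersetCard_univ.mp hU),
      ← Finset.sum_filter, Finset.sum_const, smul_eq_mul, mul_comm]
  -- Step 3: the good sets `U` are a disjoint union over nonzero dual codewords
  set D : Finset (Fin n → ZMod 2) :=
    Finset.univ.filter fun c => Matrix.vecMul c G₀ = 0 ∧ c ≠ 0 with hD
  clear_value D
  have hstep3 : (((Finset.univ : Finset (Fin n)).powersetCard u).filter fun U =>
        ∃ c : Fin n → ZMod 2, Matrix.vecMul c G₀ = 0 ∧ c ≠ 0 ∧ supp c ⊆ U)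
      = D.biUnion fun c =>
          ((Finset.univ : Finset (Fin n)).powersetCard u).filter fun U => supp c ⊆ U := by
    ext U
    simp only [Finset.mem_filter, Finset.mem_biUnion, hD, Finset.mem_univ, true_and]
    constructor
    · rintro ⟨hU, c, h1, h2, h3⟩
      exact ⟨c, ⟨h1, h2⟩, hU, h3⟩
    · rintro ⟨c, ⟨h1, h2⟩, hU, h3⟩
      exact ⟨hU, c, h1, h2, h3⟩
  have hdisj : ∀ c₁ ∈ D, ∀ c₂ ∈ D, c₁ ≠ c₂ →
      Disjoint (((Finset.univ : Finset (Fin n)).powersetCard u).filter fun U => supp c₁ ⊆ U)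
        (((Finset.univ : Finset (Fin n)).powersetCard u).filter fun U => supp c₂ ⊆ U) := by
    intro a ha b hb hne
    rw [Finset.disjoint_left]
    intro U hU1 hU2
    simp only [hD, Finset.mem_filter, Finset.mem_univ, true_and] at ha hb hU1 hU2
    exact hne (Stmt8Aux.unique_dual hmin hu₂ hd1
      (Finset.mem_powersetCard_univ.mp hU1.1) ha.1 ha.2 hU1.2 hb.1 hb.2 hU2.2)
  have hstep4 : failCount n l G₀ u
      = 2 ^ (n - 1) * ∑ c ∈ D,
          (if wt c ≤ u then (n - wt c).choose (u - wt c) else 0) := by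
    rw [hstep2, hstep3, Finset.card_biUnion hdisj]
    congr 1
    apply Finset.sum_congr rfl
    intro c _
    split_ifs with hw
    · exact Stmt8Aux.card_supersets (supp c) hw
    · rw [Finset.card_eq_zero, Finset.filter_eq_empty_iff]
      intro U hU hsub
      exact hw (le_trans (Finset.card_le_card hsub)
        (le_of_eq (Finset.mem_powersetCard_univ.mp hU)))
  -- Step 5: regroup by weight
  have hfiber : ∀ w ∈ Finset.Icc d₀ u,
      ((D.filter fun c => wt c ≤ u).filter fun c => wt c = w).card = B w := by
    intro w hw
    rw [Finset.mem_Icc] at hw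
    have hset : ((D.filter fun c => wt c ≤ u).filter fun c => wt c = w)
        = Finset.univ.filter fun c : Fin n → ZMod 2 =>
            Matrix.vecMul c G₀ = 0 ∧ wt c = w := by
      ext c
      simp only [hD, Finset.mem_filter, Finset.mem_univ, true_and]
      constructor
      · rintro ⟨⟨⟨h1, _⟩, _⟩, h4⟩
        exact ⟨h1, h4⟩
      · rintro ⟨h1, h4⟩
        have hcn : c ≠ 0 := by
          intro h0
          rw [h0, Stmt8Aux.wt_zero] at h4
          clear hstep1 hstep2 hstep4
          omega
        exact ⟨⟨⟨h1, hcn⟩, by clear hstep1 hstep2 hstep4; omega⟩, h4⟩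
    rw [hset, hB w, Set.ncard_eq_toFinset_card', Set.toFinset_setOf]
  have hstep5 : ∑ c ∈ D, (if wt c ≤ u then (n - wt c).choose (u - wt c) else 0)
      = ∑ w ∈ Finset.Icc d₀ u, B w * (n - w).choose (u - w) := by
    rw [← Finset.sum_filter]
    have hmaps : ∀ c ∈ D.filter fun c => wt c ≤ u, wt c ∈ Finset.Icc d₀ u := by
      intro c hc
      simp only [hD, Finset.mem_filter, Finset.mem_univ, true_and] at hc
      exact Finset.mem_Icc.mpr ⟨hmin c hc.1.1 hc.1.2, hc.2⟩
    rw [← Finset.sum_fiberwise_of_maps_to hmaps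
      (fun c => (n - wt c).choose (u - wt c))]
    apply Finset.sum_congr rfl
    intro w hw
    calc (∑ c ∈ (D.filter fun c => wt c ≤ u).filter fun c => wt c = w,
            (n - wt c).choose (u - wt c))
        = ∑ _c ∈ (D.filter fun c => wt c ≤ u).filter fun c => wt c = w,
            (n - w).choose (u - w) := by
          apply Finset.sum_congr rfl
          intro c hc
          rw [(Finset.mem_filter.mp hc).2]
      _ = B w * (n - w).choose (u - w) := by
          rw [Finset.sum_const, smul_eq_mul, hfiber w hw]
  -- Final arithmetic
  have hfinal : (failCount n l G₀ u : ℝ)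
      = 2 ^ (n - 1) * ∑ w ∈ Finset.Icc d₀ u,
          (B w : ℝ) * ((n - w).choose (u - w) : ℝ) := by
    rw [hstep4, hstep5]
    push_cast
    ring
  rw [hfinal]
  have hC : (n.choose u : ℝ) ≠ 0 := Nat.cast_ne_zero.mpr (Nat.choose_pos hun).ne'
  have h2n : (2 : ℝ) ^ n = 2 * 2 ^ (n - 1) := by
    conv_lhs => rw [show n = (n - 1) + 1 from (Nat.sub_add_cancel hn1).symm]
    ring
  rw [h2n]
  have h2 : (2 : ℝ) ^ (n - 1) ≠ 0 := by positivity
  field_simp
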